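/- arXiv:1511.07498 — 4 statements merged into one kernel-verified Lean document; each statement's English description precedes it below -/
import Mathlib

section
/- Let c > 0, a > 0 and y₀ > a/c, and let T ≥ (1/a)·ln(c·y₀/(c·y₀ − a)). Then there is no differentiable function y : ℝ → ℝ with y(0) = y₀ satisfying y'(t) ≥ c·y(t)² − a·y(t) for all t ∈ [0, T]. (Equivalently: any solution of the differential inequality y' ≥ cy² − ay with initial data y₀ > a/c blows up in finite time, no later than (1/a)ln(cy₀/(cy₀ − a)).) -/
/-- Any solution of the differential inequality `y' ≥ c y² − a y` with
initial data `y₀ > a/c` blows up no later than `(1/a) ln(c y₀/(c y₀ − a))`. -/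
theorem stmt_1 (c a y₀ T : ℝ) (hc : 0 < c) (ha : 0 < a) (hy₀ : a / c < y₀)
    (hT : (1 / a) * Real.log (c * y₀ / (c * y₀ - a)) ≤ T) :
    ¬ ∃ y : ℝ → ℝ, Differentiable ℝ y ∧ y 0 = y₀ ∧
      ∀ t ∈ Set.Icc (0 : ℝ) T, c * (y t) ^ 2 - a * y t ≤ deriv y t := by
  rintro ⟨y, hy, hy0, hineq⟩
  have hca : 0 < a / c := div_pos ha hc
  have hay : a < c * y₀ := (div_lt_iff₀' hc).mp hy₀
  have hden : 0 < c * y₀ - a := by linarith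
  have hcy : 0 < c * y₀ := by linarith
  have harg : (1:ℝ) < c * y₀ / (c * y₀ - a) := by
    rw [lt_div_iff₀ hden]; linarith
  set T₁ : ℝ := (1 / a) * Real.log (c * y₀ / (c * y₀ - a)) with hT₁
  have hlog : 0 < Real.log (c * y₀ / (c * y₀ - a)) := Real.log_pos harg
  have hT₁pos : 0 < T₁ := by positivity
  have hT₁mem : T₁ ∈ Set.Icc (0:ℝ) T := ⟨le_of_lt hT₁pos, hT⟩
  -- Step 1: y stays above a/c on [0,T]
  have hstay : ∀ t ∈ Set.Icc (0:ℝ) T, a / c < y t := by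
    by_contra h
    push_neg at h
    obtain ⟨t₀, ht₀mem, ht₀⟩ := h
    set S : Set ℝ := {t | t ∈ Set.Icc (0:ℝ) T ∧ y t ≤ a / c} with hS
    have hSne : S.Nonempty := ⟨t₀, ht₀mem, ht₀⟩
    have hSbdd : BddBelow S := ⟨0, fun t ht => ht.1.1⟩
    have hSclosed : IsClosed S := by
      have : S = Set.Icc (0:ℝ) T ∩ y ⁻¹' Set.Iic (a / c) := rfl
      rw [this]
      exact isClosed_Icc.inter (isClosed_Iic.preimage hy.continuous)
    have ht₁mem : sInf S ∈ S := hSclosed.csInf_mem hSne hSbdd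
    set t₁ := sInf S with ht₁
    have ht₁pos : 0 < t₁ := by
      rcases lt_or_eq_of_le ht₁mem.1.1 with h | h
      · exact h
      · exfalso; have := ht₁mem.2; rw [← h, hy0] at this; linarith
    have hbefore : ∀ t, 0 ≤ t → t < t₁ → a / c < y t := by
      intro t ht0 htlt
      by_contra h'
      push_neg at h'
      have : t ∈ S := ⟨⟨ht0, le_trans htlt.le ht₁mem.1.2⟩, h'⟩
      exact absurd (csInf_le hSbdd this) (not_le.mpr htlt)
    have hmono : MonotoneOn y (Set.Icc 0 t₁) := by
      apply monotoneOn_of_deriv_nonneg (convex_Icc 0 t₁) hy.continuous.continuousOn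
      · exact hy.differentiableOn
      · intro t ht
        rw [interior_Icc] at ht
        have h1 : a / c < y t := hbefore t ht.1.le ht.2
        have h2 : a < c * y t := (div_lt_iff₀' hc).mp h1
        have h3 : 0 < y t := lt_trans hca h1
        have := hineq t ⟨ht.1.le, le_trans ht.2.le ht₁mem.1.2⟩
        nlinarith
    have := hmono ⟨le_refl 0, ht₁pos.le⟩ ⟨ht₁pos.le, le_refl t₁⟩ ht₁pos.le
    rw [hy0] at this
    have := ht₁mem.2
    linarith
  have hypos : ∀ t ∈ Set.Icc (0:ℝ) T, 0 < y t := fun t ht => lt_trans hca (hstay t ht)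
  -- Step 2: u(t) = exp(-a t) (1/y t - c/a) is nonincreasing on [0,T]
  set u : ℝ → ℝ := fun t => Real.exp (-a * t) * ((y t)⁻¹ - c / a) with hu
  have hderiv : ∀ t ∈ Set.Icc (0:ℝ) T, y t ≠ 0 →
      HasDerivAt u (Real.exp (-a * t) * (-a) * ((y t)⁻¹ - c / a)
        + Real.exp (-a * t) * (-(deriv y t) / (y t) ^ 2)) t := by
    intro t _ hyne
    have h1 : HasDerivAt (fun s => -a * s) (-a) t := by
      simpa using (hasDerivAt_id t).const_mul (-a)
    have h2 : HasDerivAt (fun s => Real.exp (-a * s)) (Real.exp (-a * t) * (-a)) t := h1.exp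
    have h3 : HasDerivAt (fun s => (y s)⁻¹) (-(deriv y t) / (y t) ^ 2) t :=
      ((hy t).hasDerivAt).inv hyne
    have h4 : HasDerivAt (fun s => (y s)⁻¹ - c / a) (-(deriv y t) / (y t) ^ 2) t :=
      h3.sub_const _
    exact h2.mul h4
  have hanti : AntitoneOn u (Set.Icc 0 T) := by
    apply antitoneOn_of_deriv_nonpos (convex_Icc 0 T)
    · apply ContinuousOn.mul (by fun_prop)
      apply ContinuousOn.sub _ continuousOn_const
      exact ContinuousOn.inv₀ hy.continuous.continuousOn
        (fun t ht => (hypos t ht).ne')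
    · intro t ht
      rw [interior_Icc] at ht
      have ht' : t ∈ Set.Icc (0:ℝ) T := ⟨ht.1.le, ht.2.le⟩
      exact ((hderiv t ht' (hypos t ht').ne')).differentiableAt.differentiableWithinAt
    · intro t ht
      rw [interior_Icc] at ht
      have ht' : t ∈ Set.Icc (0:ℝ) T := ⟨ht.1.le, ht.2.le⟩
      have hyt := hypos t ht'
      rw [(hderiv t ht' hyt.ne').deriv]
      have hd := hineq t ht'
      have he : 0 < Real.exp (-a * t) := Real.exp_pos _
      have key : Real.exp (-a * t) * (-a) * ((y t)⁻¹ - c / a)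
          + Real.exp (-a * t) * (-(c * (y t)^2 - a * y t) / (y t) ^ 2) = 0 := by
        field_simp
        ring
      have hle : -(deriv y t) / (y t)^2 ≤ -(c * (y t)^2 - a * y t) / (y t)^2 :=
        div_le_div_of_nonneg_right (by linarith) (by positivity)
      nlinarith [mul_le_mul_of_nonneg_left hle he.le]
  -- Step 3: evaluate at the blow-up time T₁
  have hy₀pos : 0 < y₀ := lt_trans hca hy₀
  have hmem0 : (0:ℝ) ∈ Set.Icc (0:ℝ) T := ⟨le_refl 0, le_trans hT₁pos.le hT⟩
  have hfinal := hanti hmem0 hT₁mem hT₁pos.le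
  have hexp : Real.exp (-a * T₁) = (c * y₀ - a) / (c * y₀) := by
    have : -a * T₁ = Real.log ((c * y₀ - a) / (c * y₀)) := by
      rw [hT₁, Real.log_div hden.ne' hcy.ne']
      rw [show c * y₀ / (c * y₀ - a) = c * y₀ / (c * y₀ - a) from rfl]
      rw [Real.log_div hcy.ne' hden.ne']
      field_simp
      ring
    rw [this, Real.exp_log (by positivity)]
  have hyT : 0 < y T₁ := hypos T₁ hT₁mem
  have hu0 : u 0 = (y₀)⁻¹ - c / a := by
    simp [hu, hy0]
  have huT : u T₁ = (c * y₀ - a) / (c * y₀) * ((y T₁)⁻¹ - c / a) := by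
    simp only [hu]
    rw [hexp]
  rw [huT, hu0] at hfinal
  have hinv : 0 < (y T₁)⁻¹ := inv_pos.mpr hyT
  have hKey : (y₀)⁻¹ - c / a = -((c * y₀ - a) / (c * y₀)) * (c / a) := by
    field_simp
    ring
  rw [hKey] at hfinal
  have hK : 0 < (c * y₀ - a) / (c * y₀) := div_pos hden hcy
  nlinarith [mul_pos hK hinv]
end

section
/- (Theorem 2.3, non-delayed blow-up.) Let r, K, ω, D, d, c, ω₁, D₁ be positive reals and δ₁ ∈ (0, c) with ω₁/(c − δ₁) − D₁ > 0. Let X₀, Y₀ be positive reals with X₀ ≤ K, X₀ > ω₁/(c − δ₁) − D₁, and satisfying the largeness condition Y₀·ln( X₀ / (ω₁/(c − δ₁) − D₁) ) > ω/δ₁. Set T* = 1/(δ₁·Y₀). Then there exist no differentiable functions X, Y : ℝ → ℝ with X(0) = X₀, Y(0) = Y₀, X(t) > 0 and Y(t) > 0 for all t ∈ [0, T*], satisfying for all t ∈ [0, T*] the system X'(t) = r·X(t)·(1 − X(t)/K) − ω·X(t)·Y(t)/(D + d·X(t) + Y(t)) and Y'(t) = c·Y(t)² − ω₁·Y(t)²/(X(t)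 + D₁). In other words, any such solution blows up at some finite time T ≤ 1/(δ₁Y₀). -/
open Set Real

set_option maxHeartbeats 1000000 in
/-- Theorem 2.3 (non-delayed blow-up): under the largeness condition on the
initial data, no positive solution of the non-delayed predator–prey system
exists on `[0, 1/(δ₁ Y₀)]`; i.e. solutions blow up by time `1/(δ₁ Y₀)`. -/
theorem stmt_5 (r K ω D d c ω₁ D₁ δ₁ X₀ Y₀ : ℝ)
    (hr : 0 < r) (hK : 0 < K) (hω : 0 < ω) (hD : 0 < D) (hd : 0 < d)
    (hc : 0 < c) (hω₁ : 0 < ω₁) (hD₁ : 0 < D₁)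
    (hδ₁ : 0 < δ₁) (hδ₁c : δ₁ < c)
    (hthr : 0 < ω₁ / (c - δ₁) - D₁)
    (hX₀ : 0 < X₀) (hY₀ : 0 < Y₀) (hX₀K : X₀ ≤ K)
    (hX₀thr : ω₁ / (c - δ₁) - D₁ < X₀)
    (hlarge : ω / δ₁ < Y₀ * Real.log (X₀ / (ω₁ / (c - δ₁) - D₁))) :
    ¬ ∃ X Y : ℝ → ℝ, X 0 = X₀ ∧ Y 0 = Y₀ ∧
      (∀ t ∈ Set.Icc (0 : ℝ) (1 / (δ₁ * Y₀)), 0 < X t ∧ 0 < Y t) ∧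
      (∀ t ∈ Set.Icc (0 : ℝ) (1 / (δ₁ * Y₀)),
        HasDerivAt X (r * X t * (1 - X t / K) - ω * X t * Y t / (D + d * X t + Y t)) t ∧
        HasDerivAt Y (c * (Y t) ^ 2 - ω₁ * (Y t) ^ 2 / (X t + D₁)) t) := by
  rintro ⟨X, Y, hX0, hY0, hpos, hode⟩
  set T : ℝ := 1 / (δ₁ * Y₀) with hTdef
  set a : ℝ := ω₁ / (c - δ₁) - D₁ with hadef
  have hcδ : 0 < c - δ₁ := by linarith
  have hT : 0 < T := by positivity
  have hXc : ContinuousOn X (Icc 0 T) :=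
    fun t ht => ((hode t ht).1.continuousAt).continuousWithinAt
  have hYc : ContinuousOn Y (Icc 0 T) :=
    fun t ht => ((hode t ht).2.continuousAt).continuousWithinAt
  -- Step 1: X ≤ K on [0,T]
  have hXK : ∀ t ∈ Icc (0:ℝ) T, X t ≤ K := by
    have := image_le_of_deriv_right_lt_deriv_boundary'
      (f := X)
      (f' := fun t => r * X t * (1 - X t / K) - ω * X t * Y t / (D + d * X t + Y t))
      (B := fun _ => K) (B' := fun _ => 0) (a := 0) (b := T)
      hXc
      (fun x hx => ((hode x (Ico_subset_Icc_self hx)).1).hasDerivWithinAt)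
      (by rw [hX0]; exact hX₀K)
      continuousOn_const
      (fun x _ => (hasDerivWithinAt_const x _ K))
      ?_
    · exact this
    · intro x hx hXx
      have hx' := Ico_subset_Icc_self hx
      have hXp := (hpos x hx').1
      have hYp := (hpos x hx').2
      have hXx' : X x = K := hXx
      show r * X x * (1 - X x / K) - ω * X x * Y x / (D + d * X x + Y x) < 0
      rw [hXx']
      have h1 : (1 : ℝ) - K / K = 0 := by rw [div_self hK.ne', sub_self]
      rw [h1]
      have hden : 0 < D + d * K + Y x := by positivity
      have : 0 < ω * K * Y x / (D + d * K + Y x) := by positivity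
      linarith
  -- Step 2: lower bound X t ≥ X₀ exp(-ω t)
  have hlow : ∀ t ∈ Icc (0:ℝ) T, X₀ * Real.exp (-(ω * t)) ≤ X t := by
    have hf' : ∀ x : ℝ, HasDerivAt (fun t => X₀ * Real.exp (-(ω * t)))
        (X₀ * (Real.exp (-(ω * x)) * (-ω))) x := by
      intro x
      have h1 : HasDerivAt (fun t : ℝ => -(ω * t)) (-ω) x := by
        exact (((hasDerivAt_id x).const_mul ω).neg).congr_deriv (by ring)
      exact (h1.exp).const_mul X₀
    have := image_le_of_deriv_right_lt_deriv_boundary'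
      (f := fun t => X₀ * Real.exp (-(ω * t)))
      (f' := fun x => X₀ * (Real.exp (-(ω * x)) * (-ω)))
      (B := X)
      (B' := fun t => r * X t * (1 - X t / K) - ω * X t * Y t / (D + d * X t + Y t))
      (a := 0) (b := T)
      (fun x _ => (hf' x).continuousAt.continuousWithinAt)
      (fun x _ => (hf' x).hasDerivWithinAt)
      (by simp [hX0])
      hXc
      (fun x hx => ((hode x (Ico_subset_Icc_self hx)).1).hasDerivWithinAt)
      ?_
    · exact this
    · intro x hx hfx
      have hx' := Ico_subset_Icc_self hx
      have hXp := (hpos x hx').1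
      have hYp := (hpos x hx').2
      have hXle := hXK x hx'
      have hlog : 0 ≤ r * X x * (1 - X x / K) := by
        have : 0 ≤ 1 - X x / K := by
          rw [sub_nonneg, div_le_one hK]; exact hXle
        positivity
      have hden : 0 < D + d * X x + Y x := by positivity
      have hpred : ω * X x * Y x / (D + d * X x + Y x) < ω * X x := by
        rw [div_lt_iff₀ hden]
        nlinarith [mul_pos (mul_pos hω hXp) (show (0:ℝ) < D + d * X x by positivity)]
      have hfx' : X₀ * Real.exp (-(ω * x)) = X x := hfx
      calc X₀ * (Real.exp (-(ω * x)) * (-ω)) = -(ω * (X₀ * Real.exp (-(ω * x)))) := by ring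
        _ = -(ω * X x) := by rw [hfx']
        _ < r * X x * (1 - X x / K) - ω * X x * Y x / (D + d * X x + Y x) := by
            nlinarith
  -- Step 3: X t > a on [0,T]
  have haX : ∀ t ∈ Icc (0:ℝ) T, a < X t := by
    have hXa : 0 < X₀ / a := by positivity
    have hlog2 : ω * T < Real.log (X₀ / a) := by
      have h1 : ω / δ₁ / Y₀ < Real.log (X₀ / a) := by
        rw [div_lt_iff₀ hY₀] at *
        linarith [hlarge]
      calc ω * T = ω / δ₁ / Y₀ := by rw [hTdef]; field_simp
        _ < _ := h1
    have hexp : Real.exp (ω * T) < X₀ / a := by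
      calc Real.exp (ω * T) < Real.exp (Real.log (X₀ / a)) := Real.exp_lt_exp.2 hlog2
        _ = X₀ / a := Real.exp_log hXa
    have hkey : a < X₀ * Real.exp (-(ω * T)) := by
      rw [lt_div_iff₀ hthr] at hexp
      have h2 := mul_lt_mul_of_pos_right hexp (Real.exp_pos (-(ω * T)))
      have h3 : Real.exp (ω * T) * Real.exp (-(ω * T)) = 1 := by
        rw [← Real.exp_add]; simp
      have h4 : Real.exp (ω * T) * a * Real.exp (-(ω * T)) = a := by
        rw [show Real.exp (ω * T) * a * Real.exp (-(ω * T))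
            = a * (Real.exp (ω * T) * Real.exp (-(ω * T))) from by ring, h3, mul_one]
      linarith [h2, h4.symm.le, h4.le]
    intro t ht
    have hmono : Real.exp (-(ω * T)) ≤ Real.exp (-(ω * t)) := by
      apply Real.exp_le_exp.2
      have := ht.2
      nlinarith
    calc a < X₀ * Real.exp (-(ω * T)) := hkey
      _ ≤ X₀ * Real.exp (-(ω * t)) := by nlinarith [Real.exp_pos (-(ω * T))]
      _ ≤ X t := hlow t ht
  -- Step 4: δ₁ < c - ω₁/(X t + D₁) on [0,T]
  have hδ : ∀ t ∈ Icc (0:ℝ) T, δ₁ < c - ω₁ / (X t + D₁) := by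
    intro t ht
    have h1 : ω₁ / (c - δ₁) < X t + D₁ := by
      have := haX t ht; rw [hadef] at this; linarith
    have hXD : 0 < X t + D₁ := lt_of_le_of_lt (by positivity) h1
    have h2 : ω₁ < (X t + D₁) * (c - δ₁) := by
      rw [div_lt_iff₀ hcδ] at h1; linarith
    have h3 : ω₁ / (X t + D₁) < c - δ₁ := by
      rw [div_lt_iff₀ hXD]; linarith
    linarith
  -- Step 5: bound on Y on the compact interval
  obtain ⟨t₀, ht₀, hM⟩ := isCompact_Icc.exists_isMaxOn (nonempty_Icc.2 hT.le) hYc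
  set M : ℝ := Y t₀ with hMdef
  have hMY₀ : Y₀ ≤ M := by rw [← hY0]; exact hM (left_mem_Icc.2 hT.le)
  have hMpos : 0 < M := lt_of_lt_of_le hY₀ hMY₀
  set b : ℝ := (1 - Y₀ / (2 * M)) * T with hbdef
  have hfrac : Y₀ / (2 * M) ≤ 1 / 2 := by
    rw [div_le_div_iff₀ (by positivity) (by norm_num)]; linarith
  have hfracpos : 0 < Y₀ / (2 * M) := by positivity
  have hb0 : 0 ≤ b := by
    rw [hbdef]; exact mul_nonneg (by linarith) hT.le
  have hbT : b < T := by
    have h5 : 0 < Y₀ / (2 * M) * T := mul_pos hfracpos hT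
    calc b = T - Y₀ / (2 * M) * T := by rw [hbdef]; ring
      _ < T := by linarith
  have hTinv : δ₁ * Y₀ * T = 1 := by
    rw [hTdef]; field_simp
  set g : ℝ → ℝ := fun t => 1 - δ₁ * Y₀ * t with hgdef
  have hgb : g b = Y₀ / (2 * M) := by
    simp only [hgdef, hbdef]
    have : δ₁ * Y₀ * ((1 - Y₀ / (2 * M)) * T) = (1 - Y₀ / (2 * M)) * (δ₁ * Y₀ * T) := by ring
    rw [this, hTinv]; ring
  have hgpos : ∀ t ∈ Icc (0:ℝ) b, 0 < g t := by
    intro t ht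
    have : g b ≤ g t := by
      have h6 : δ₁ * Y₀ * t ≤ δ₁ * Y₀ * b :=
        mul_le_mul_of_nonneg_left ht.2 (by positivity)
      simp only [hgdef]
      linarith
    calc (0:ℝ) < Y₀ / (2 * M) := hfracpos
      _ = g b := hgb.symm
      _ ≤ g t := this
  have hfg : ∀ t ∈ Icc (0:ℝ) b, HasDerivAt (fun s => Y₀ / g s)
      (δ₁ * (Y₀ / g t) ^ 2) t := by
    intro t ht
    have hgne : g t ≠ 0 := (hgpos t ht).ne'
    have hg' : HasDerivAt g (-(δ₁ * Y₀)) t := by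
      simpa using ((hasDerivAt_id t).const_mul (δ₁ * Y₀)).const_sub 1
    have : HasDerivAt (fun s => Y₀ / g s) _ t := (hasDerivAt_const t Y₀).div hg' hgne
    convert this using 1
    field_simp
    ring
  -- Comparison: Y₀ / g t ≤ Y t on [0, b]
  have hcomp : ∀ t ∈ Icc (0:ℝ) b, Y₀ / g t ≤ Y t := by
    have hsub : Icc (0:ℝ) b ⊆ Icc 0 T := Icc_subset_Icc le_rfl hbT.le
    have := image_le_of_deriv_right_lt_deriv_boundary'
      (f := fun t => Y₀ / g t)
      (f' := fun t => δ₁ * (Y₀ / g t) ^ 2)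
      (B := Y)
      (B' := fun t => c * (Y t) ^ 2 - ω₁ * (Y t) ^ 2 / (X t + D₁))
      (a := 0) (b := b)
      (fun x hx => (hfg x hx).continuousAt.continuousWithinAt)
      (fun x hx => (hfg x (Ico_subset_Icc_self hx)).hasDerivWithinAt)
      (by simp [hgdef, hY0])
      (hYc.mono hsub)
      (fun x hx => ((hode x (hsub (Ico_subset_Icc_self hx))).2).hasDerivWithinAt)
      ?_
    · exact this
    · intro x hx hfx
      have hx' := hsub (Ico_subset_Icc_self hx)
      have hYp := (hpos x hx').2
      have hδx := hδ x hx'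
      have hXD : 0 < X x + D₁ := by
        have := (hpos x hx').1; linarith
      have hfx' : Y₀ / g x = Y x := hfx
      show δ₁ * (Y₀ / g x) ^ 2 < c * Y x ^ 2 - ω₁ * Y x ^ 2 / (X x + D₁)
      rw [hfx']
      have h2 : δ₁ * Y x ^ 2 < (c - ω₁ / (X x + D₁)) * Y x ^ 2 :=
        mul_lt_mul_of_pos_right hδx (pow_pos hYp 2)
      have h3 : (c - ω₁ / (X x + D₁)) * Y x ^ 2 = c * Y x ^ 2 - ω₁ * Y x ^ 2 / (X x + D₁) := by
        field_simp
      rw [h3] at h2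
      linarith
  -- Conclusion
  have hbmem : b ∈ Icc (0:ℝ) b := right_mem_Icc.2 hb0
  have hfb : Y₀ / g b = 2 * M := by
    rw [hgb]
    field_simp
  have := hcomp b hbmem
  rw [hfb] at this
  have hYbM : Y b ≤ M := hM ⟨hb0, hbT.le⟩
  linarith
end

section
/- (Theorem 2.1, blow-up in the delayed model.) Let r, K, ω, D, d, c, ω₁, D₁ be positive reals, τ > 0, and let X₀, Y₀ be positive with X₀ ≤ K. Fix t₁ > τ and M ≥ Y₀, set a = ω₁·M·e^{ω(t₁−τ)}/X₀, and assume c·Y₀ > a and t₁ ≥ (1/a)·ln( c·Y₀/(c·Y₀ − a) ). Then there exist no differentiable functions X, Y : ℝ → ℝ satisfying: (i) X(t) = X₀ and Y(t) = Y₀ for all t ∈ [−τ, 0] (constant history); (ii) for all t ∈ [0, t₁], X'(t) = r·X(t)·(1 − X(t)/K) − ω·X(t)·Y(t)/(D + d·X(t) + Y(t)) and Y'(t) = Y(t)·( c·Y(t) − ω₁·Y(t−τ)/(X(t−τ) + D₁) ); (iii) X(t) > 0 for all t ∈ [−τ, t₁] and 0 < Y(t) ≤ M for all t ∈ [−τ,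 t₁]. Consequently, for sufficiently large initial data Y cannot remain bounded on any such interval and solutions blow up in finite time; in particular the interior equilibrium of the delayed system is not globally asymptotically stable. -/
set_option maxHeartbeats 1000000 in
/-- Theorem 2.1 (blow-up in the delayed model): if `Y` were a solution of the
delayed system bounded by `M` on `[−τ, t₁]`, with `a = ω₁ M e^{ω(t₁−τ)}/X₀`,
`c Y₀ > a` and `t₁ ≥ (1/a) ln(c Y₀/(c Y₀ − a))`, we get a contradiction; hence
solutions with large data blow up in finite time. -/
theorem stmt_7 (r K ω D d c ω₁ D₁ τ X₀ Y₀ t₁ M a : ℝ)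
    (hr : 0 < r) (hK : 0 < K) (hω : 0 < ω) (hD : 0 < D) (hd : 0 < d)
    (hc : 0 < c) (hω₁ : 0 < ω₁) (hD₁ : 0 < D₁) (hτ : 0 < τ)
    (hX₀ : 0 < X₀) (hY₀ : 0 < Y₀) (hX₀K : X₀ ≤ K)
    (ht₁τ : τ < t₁) (hM : Y₀ ≤ M)
    (ha : a = ω₁ * M * Real.exp (ω * (t₁ - τ)) / X₀)
    (hca : a < c * Y₀)
    (ht₁ : (1 / a) * Real.log (c * Y₀ / (c * Y₀ - a)) ≤ t₁) :
    ¬ ∃ X Y : ℝ → ℝ,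
      (∀ t ∈ Set.Icc (-τ) (0 : ℝ), X t = X₀ ∧ Y t = Y₀) ∧
      (∀ t ∈ Set.Icc (0 : ℝ) t₁,
        HasDerivAt X (r * X t * (1 - X t / K) - ω * X t * Y t / (D + d * X t + Y t)) t ∧
        HasDerivAt Y (Y t * (c * Y t - ω₁ * Y (t - τ) / (X (t - τ) + D₁))) t) ∧
      (∀ t ∈ Set.Icc (-τ) t₁, 0 < X t ∧ 0 < Y t ∧ Y t ≤ M) := by
  rintro ⟨X, Y, hinit, hode, hbnd⟩
  have hM0 : 0 < M := lt_of_lt_of_le hY₀ hM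
  have ha0 : 0 < a := by rw [ha]; positivity
  have hX0 : X 0 = X₀ := (hinit 0 ⟨by linarith, le_refl 0⟩).1
  have hY0 : Y 0 = Y₀ := (hinit 0 ⟨by linarith, le_refl 0⟩).2
  -- positivity / bounds on [0, t₁]
  have hpos : ∀ t ∈ Set.Icc (0:ℝ) t₁, 0 < X t ∧ 0 < Y t ∧ Y t ≤ M := by
    intro t ht; exact hbnd t ⟨by linarith [ht.1], ht.2⟩
  have hXc : ContinuousOn X (Set.Icc (0:ℝ) t₁) := fun t ht =>
    ((hode t ht).1.continuousAt).continuousWithinAt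
  -- Step 1 : X ≤ K on [0, t₁]
  have hXK : ∀ s ∈ Set.Icc (0:ℝ) t₁, X s ≤ K := by
    intro s hs
    by_contra hgt
    push_neg at hgt
    set A : Set ℝ := Set.Icc 0 s ∩ X ⁻¹' Set.Iic K with hA
    have hsub : Set.Icc (0:ℝ) s ⊆ Set.Icc 0 t₁ := Set.Icc_subset_Icc le_rfl hs.2
    have hAne : A.Nonempty := ⟨0, ⟨le_rfl, hs.1⟩, by simp [hX0, hX₀K]⟩
    have hAbdd : BddAbove A := BddAbove.mono Set.inter_subset_left bddAbove_Icc
    have hAclosed : IsClosed A :=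
      (hXc.mono hsub).preimage_isClosed_of_isClosed isClosed_Icc isClosed_Iic
    set t₀ := sSup A with ht₀def
    have ht₀A : t₀ ∈ A := hAclosed.csSup_mem hAne hAbdd
    have ht₀K : X t₀ ≤ K := ht₀A.2
    have ht₀lt : t₀ < s := by
      rcases lt_or_eq_of_le ht₀A.1.2 with h | h
      · exact h
      · rw [h] at ht₀K; linarith
    have hgtK : ∀ t ∈ Set.Ioc t₀ s, K < X t := by
      intro t ht
      by_contra h; push_neg at h
      have : t ∈ A := ⟨⟨le_trans ht₀A.1.1 ht.1.le, ht.2⟩, h⟩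
      exact absurd (le_csSup hAbdd this) (not_le.mpr ht.1)
    have hanti : StrictAntiOn X (Set.Icc t₀ s) := by
      apply strictAntiOn_of_deriv_neg (convex_Icc _ _)
        (hXc.mono (Set.Icc_subset_Icc ht₀A.1.1 hs.2))
      intro t ht
      rw [interior_Icc] at ht
      have htI : t ∈ Set.Icc (0:ℝ) t₁ := ⟨le_trans ht₀A.1.1 ht.1.le, le_trans ht.2.le hs.2⟩
      rw [(hode t htI).1.deriv]
      have hKX := hgtK t ⟨ht.1, ht.2.le⟩
      obtain ⟨hXp, hYp, _⟩ := hpos t htI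
      have hP : 0 < D + d * X t + Y t := by positivity
      have h1 : r * X t * (1 - X t / K) < 0 := by
        have h2 : (1:ℝ) < X t / K := by rw [lt_div_iff₀ hK]; nlinarith
        nlinarith [mul_pos (mul_pos hr hXp) (by linarith : (0:ℝ) < X t / K - 1)]
      have h2 : 0 < ω * X t * Y t / (D + d * X t + Y t) := by positivity
      linarith
    have := hanti (Set.left_mem_Icc.mpr ht₀lt.le) (Set.right_mem_Icc.mpr ht₀lt.le) ht₀lt
    linarith
  -- Step 2 : X₀ ≤ X t · e^{ωt} on [0, t₁]
  have hXlow : ∀ t ∈ Set.Icc (0:ℝ) t₁, X₀ ≤ X t * Real.exp (ω * t) := by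
    have hder : ∀ t ∈ Set.Icc (0:ℝ) t₁, HasDerivAt (fun u => X u * Real.exp (ω * u))
        ((r * X t * (1 - X t / K) - ω * X t * Y t / (D + d * X t + Y t)) * Real.exp (ω * t)
          + X t * (Real.exp (ω * t) * ω)) t := by
      intro t ht
      have hE : HasDerivAt (fun u => Real.exp (ω * u)) (Real.exp (ω * t) * ω) t := by
        simpa using (HasDerivAt.const_mul ω (hasDerivAt_id t)).exp
      exact (hode t ht).1.mul hE
    have hmono : MonotoneOn (fun u => X u * Real.exp (ω * u)) (Set.Icc 0 t₁) := by
      apply monotoneOn_of_deriv_nonneg (convex_Icc _ _)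
      · intro t ht; exact ((hder t ht).differentiableAt).continuousAt.continuousWithinAt
      · intro t ht
        rw [interior_Icc] at ht
        exact ((hder t (Set.mem_Icc_of_Ioo ht)).differentiableAt).differentiableWithinAt
      · intro t ht
        rw [interior_Icc] at ht
        have htI : t ∈ Set.Icc (0:ℝ) t₁ := Set.mem_Icc_of_Ioo ht
        rw [(hder t htI).deriv]
        obtain ⟨hXp, hYp, _⟩ := hpos t htI
        have hXKt := hXK t htI
        have hP : 0 < D + d * X t + Y t := by positivity
        have hE : 0 < Real.exp (ω * t) := Real.exp_pos _
        have h1 : 0 ≤ r * X t * (1 - X t / K) := by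
          have h1' : X t / K ≤ 1 := by rw [div_le_one hK]; exact hXKt
          exact mul_nonneg (mul_nonneg hr.le hXp.le) (by linarith)
        have h2 : ω * X t * Y t / (D + d * X t + Y t) ≤ ω * X t := by
          rw [div_le_iff₀ hP]
          nlinarith [mul_pos (mul_pos hω hXp) hD, mul_pos (mul_pos hω hXp) (mul_pos hd hXp)]
        nlinarith
    intro t ht
    have := hmono (Set.left_mem_Icc.mpr (by linarith [ht.1, ht.2] : (0:ℝ) ≤ t₁)) ht ht.1
    simpa [hX0] using this
  -- Step 3 : the delayed term is bounded by a on [0, t₁]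
  have hQ : ∀ t ∈ Set.Icc (0:ℝ) t₁, ω₁ * Y (t - τ) / (X (t - τ) + D₁) ≤ a := by
    intro t ht
    have hβ : 0 < Real.exp (ω * (t₁ - τ)) := Real.exp_pos _
    have hkey : X₀ * (Real.exp (ω * (t₁ - τ)))⁻¹ ≤ X (t - τ) ∧ Y (t - τ) ≤ M := by
      rcases le_or_gt (t - τ) 0 with h0 | h0
      · obtain ⟨hx, hy⟩ := hinit (t - τ) ⟨by linarith [ht.1], h0⟩
        refine ⟨?_, by rw [hy]; exact hM⟩
        rw [hx]
        have h1 : (Real.exp (ω * (t₁ - τ)))⁻¹ ≤ 1 := by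
          rw [← Real.exp_neg]
          apply Real.exp_le_one_iff.mpr
          nlinarith
        nlinarith
      · have hmem : t - τ ∈ Set.Icc (0:ℝ) t₁ := ⟨h0.le, by linarith [ht.2]⟩
        refine ⟨?_, (hpos _ hmem).2.2⟩
        have h1 := hXlow _ hmem
        have hE : 0 < Real.exp (ω * (t - τ)) := Real.exp_pos _
        have h2 : X₀ * (Real.exp (ω * (t - τ)))⁻¹ ≤ X (t - τ) := by
          have := mul_le_mul_of_nonneg_right h1 (inv_nonneg.mpr hE.le)
          rwa [mul_assoc, mul_inv_cancel₀ hE.ne', mul_one] at this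
        have h3 : (Real.exp (ω * (t₁ - τ)))⁻¹ ≤ (Real.exp (ω * (t - τ)))⁻¹ := by
          apply inv_anti₀ hE
          exact Real.exp_le_exp.mpr (by nlinarith [ht.2])
        nlinarith
    obtain ⟨hXb, hYb⟩ := hkey
    have hXp : 0 < X (t - τ) := lt_of_lt_of_le (by positivity) hXb
    have hden : 0 < X (t - τ) + D₁ := by linarith
    rw [div_le_iff₀ hden]
    have h1 : a * (X₀ * (Real.exp (ω * (t₁ - τ)))⁻¹) = ω₁ * M := by
      rw [ha]; field_simp
    have hYp : 0 < Y (t - τ) := by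
      rcases le_or_gt (t - τ) 0 with h0 | h0
      · rw [(hinit (t - τ) ⟨by linarith [ht.1], h0⟩).2]; exact hY₀
      · exact (hpos _ ⟨h0.le, by linarith [ht.2]⟩).2.1
    calc ω₁ * Y (t - τ) ≤ ω₁ * M := by nlinarith
      _ = a * (X₀ * (Real.exp (ω * (t₁ - τ)))⁻¹) := h1.symm
      _ ≤ a * (X (t - τ) + D₁) := by
          apply mul_le_mul_of_nonneg_left _ ha0.le
          linarith
  -- Step 4 : g is antitone on [0, t₁]
  set g : ℝ → ℝ := fun u => Real.exp (-(a*u)) * (Y u)⁻¹ + c/a * (1 - Real.exp (-(a*u))) with hg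
  have hgder : ∀ t ∈ Set.Icc (0:ℝ) t₁, HasDerivAt g
      ((Real.exp (-(a*t)) * (-a)) * (Y t)⁻¹
        + Real.exp (-(a*t)) * (-(Y t * (c * Y t - ω₁ * Y (t - τ) / (X (t - τ) + D₁))) / Y t ^ 2)
        + c/a * (0 - Real.exp (-(a*t)) * (-a))) t := by
    intro t ht
    have hE : HasDerivAt (fun u => Real.exp (-(a*u))) (Real.exp (-(a*t)) * (-a)) t := by
      simpa using ((HasDerivAt.const_mul a (hasDerivAt_id t)).neg).exp
    have hYinv : HasDerivAt (fun u => (Y u)⁻¹)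
        (-(Y t * (c * Y t - ω₁ * Y (t - τ) / (X (t - τ) + D₁))) / Y t ^ 2) t :=
      (hode t ht).2.inv (hpos t ht).2.1.ne'
    exact (hE.mul hYinv).add (((hasDerivAt_const t (1:ℝ)).sub hE).const_mul (c/a))
  have hganti : AntitoneOn g (Set.Icc (0:ℝ) t₁) := by
    apply antitoneOn_of_deriv_nonpos (convex_Icc _ _)
    · intro t ht; exact ((hgder t ht).differentiableAt).continuousAt.continuousWithinAt
    · intro t ht
      rw [interior_Icc] at ht
      exact ((hgder t (Set.mem_Icc_of_Ioo ht)).differentiableAt).differentiableWithinAt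
    · intro t ht
      rw [interior_Icc] at ht
      have htI : t ∈ Set.Icc (0:ℝ) t₁ := Set.mem_Icc_of_Ioo ht
      rw [(hgder t htI).deriv]
      have hYp : 0 < Y t := (hpos t htI).2.1
      have hq := hQ t htI
      set q := ω₁ * Y (t - τ) / (X (t - τ) + D₁) with hqdef
      have hE : 0 < Real.exp (-(a*t)) := Real.exp_pos _
      have heq : (Real.exp (-(a*t)) * (-a)) * (Y t)⁻¹
          + Real.exp (-(a*t)) * (-(Y t * (c * Y t - q)) / Y t ^ 2)
          + c/a * (0 - Real.exp (-(a*t)) * (-a))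
          = Real.exp (-(a*t)) / Y t * (q - a) := by
        field_simp
        ring
      rw [heq]
      exact mul_nonpos_of_nonneg_of_nonpos (by positivity) (by linarith)
  -- Step 5 : evaluate at T
  set T := (1/a) * Real.log (c*Y₀/(c*Y₀ - a)) with hT
  have hcY : 0 < c * Y₀ - a := by linarith
  have hR1 : 1 < c*Y₀/(c*Y₀ - a) := by
    rw [lt_div_iff₀ hcY]; linarith
  have hT0 : 0 ≤ T := by
    apply mul_nonneg (by positivity)
    exact Real.log_nonneg hR1.le
  have hTmem : T ∈ Set.Icc (0:ℝ) t₁ := ⟨hT0, ht₁⟩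
  have h0mem : (0:ℝ) ∈ Set.Icc (0:ℝ) t₁ := ⟨le_rfl, by linarith⟩
  have hgT : g T ≤ g 0 := hganti h0mem hTmem hT0
  have hYT : 0 < Y T := (hpos T hTmem).2.1
  have ha' : a ≠ 0 := ha0.ne'
  have hcY' : c * Y₀ ≠ 0 := by positivity
  have hY₀' : Y₀ ≠ 0 := hY₀.ne'
  have hexpT : Real.exp (-(a*T)) = (c*Y₀ - a)/(c*Y₀) := by
    have haT : a * T = Real.log (c*Y₀/(c*Y₀ - a)) := by
      rw [hT]; field_simp
    rw [haT, Real.exp_neg, Real.exp_log (by positivity)]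
    rw [inv_div]
  have hg0 : g 0 = Y₀⁻¹ := by
    simp [hg, hY0]
  have hgTv : g T = (c*Y₀ - a)/(c*Y₀) * (Y T)⁻¹ + c/a * (1 - (c*Y₀ - a)/(c*Y₀)) := by
    simp only [hg]; rw [hexpT]
  have hc2 : c/a * (1 - (c*Y₀ - a)/(c*Y₀)) = Y₀⁻¹ := by
    field_simp
    ring
  rw [hg0, hgTv, hc2] at hgT
  have : (c*Y₀ - a)/(c*Y₀) * (Y T)⁻¹ > 0 := by positivity
  linarith
end

section
/- (Corollary 2.2, blow-up in the delayed model with subquadratic predator growth.) Let r, K, ω, D, d, c, ω₁, D₁ be positive reals, τ > 0, 1 < m < 2, and let X₀, Y₀ be positive with X₀ ≤ K. Fix t₁ > τ and M ≥ Y₀, set a = ω₁·M·e^{ω(t₁−τ)}/X₀, and assume c·Y₀^{m−1} > 2a and t₁ ≥ 2·Y₀^{1−m}/(c·(m−1)). Then there exist no differentiable functions X, Y : ℝ → ℝ satisfying: (i) X(t) = X₀ and Y(t) = Y₀ for all t ∈ [−τ, 0]; (ii) for all t ∈ [0, t₁], X'(t) = r·X(t)·(1 − X(t)/K) − ω·X(t)·Y(t)/(D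 + d·X(t) + Y(t)) and Y'(t) = c·Y(t)^m − ω₁·Y(t)·Y(t−τ)/(X(t−τ) + D₁); (iii) X(t) > 0 for all t ∈ [−τ, t₁] and 0 < Y(t) ≤ M for all t ∈ [−τ, t₁]. Hence the modified delayed model, in which the cY² term is replaced by cY^m with 1 < m < 2, still blows up in finite time for sufficiently large initial data. -/
open Set Filter Topology

/-- Upper barrier lemma: if `f 0 ≤ B` and the derivative is negative whenever
`f` exceeds `B`, then `f ≤ B` on `[0, T]`. -/
lemma barrier_le {f g : ℝ → ℝ} {B T : ℝ}
    (hderiv : ∀ t ∈ Set.Icc (0:ℝ) T, HasDerivAt f (g t) t)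
    (h0 : f 0 ≤ B)
    (hneg : ∀ t ∈ Set.Icc (0:ℝ) T, B < f t → g t < 0) :
    ∀ t ∈ Set.Icc (0:ℝ) T, f t ≤ B := by
  intro t ht
  by_contra hgt
  push_neg at hgt
  set S : Set ℝ := {u | u ∈ Set.Icc (0:ℝ) t ∧ f u ≤ B} with hSdef
  have h0S : (0:ℝ) ∈ S := ⟨⟨le_rfl, ht.1⟩, h0⟩
  have hSne : S.Nonempty := ⟨0, h0S⟩
  have hSbdd : BddAbove S := ⟨t, fun u hu => hu.1.2⟩
  set s := sSup S with hs
  have hs0 : 0 ≤ s := le_csSup hSbdd h0S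
  have hst : s ≤ t := csSup_le hSne (fun u hu => hu.1.2)
  have hsIcc : s ∈ Set.Icc (0:ℝ) T := ⟨hs0, hst.trans ht.2⟩
  have hsubT : Set.Icc (0:ℝ) t ⊆ Set.Icc (0:ℝ) T := Set.Icc_subset_Icc le_rfl ht.2
  have hcl : s ∈ closure S := csSup_mem_closure hSne hSbdd
  have hfs : f s ≤ B := by
    have hne : (𝓝[S] s).NeBot := mem_closure_iff_nhdsWithin_neBot.mp hcl
    have hten : Filter.Tendsto f (𝓝[S] s) (𝓝 (f s)) :=
      ((hderiv s hsIcc).continuousAt.tendsto).mono_left nhdsWithin_le_nhds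
    exact le_of_tendsto hten (eventually_mem_nhdsWithin.mono fun u hu => hu.2)
  have hslt : s < t := lt_of_le_of_ne hst (fun h => by rw [h] at hfs; linarith)
  have hIoc : ∀ u ∈ Set.Ioc s t, B < f u := by
    intro u hu
    by_contra hle
    push_neg at hle
    have huS : u ∈ S := ⟨⟨hs0.trans hu.1.le, hu.2⟩, hle⟩
    exact absurd (le_csSup hSbdd huS) (not_le.mpr hu.1)
  have hanti : StrictAntiOn f (Set.Icc s t) := by
    apply strictAntiOn_of_deriv_neg (convex_Icc s t)
    · intro x hx
      exact ((hderiv x (hsubT ⟨hs0.trans hx.1, hx.2⟩)).continuousAt).continuousWithinAt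
    · intro x hx
      rw [interior_Icc] at hx
      have hxI : x ∈ Set.Icc (0:ℝ) T := hsubT ⟨hs0.trans hx.1.le, hx.2.le⟩
      rw [(hderiv x hxI).deriv]
      exact hneg x hxI (hIoc x ⟨hx.1, hx.2.le⟩)
  have := hanti (Set.left_mem_Icc.mpr hslt.le) (Set.right_mem_Icc.mpr hslt.le) hslt
  linarith

/-- Lower barrier lemma: if `B ≤ f 0` and the derivative is strictly positive
whenever `B ≤ f`, then `B ≤ f` on `[0, T]`. -/
lemma barrier_ge {f g : ℝ → ℝ} {B T : ℝ}
    (hderiv : ∀ t ∈ Set.Icc (0:ℝ) T, HasDerivAt f (g t) t)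
    (h0 : B ≤ f 0)
    (hpos : ∀ t ∈ Set.Icc (0:ℝ) T, B ≤ f t → 0 < g t) :
    ∀ t ∈ Set.Icc (0:ℝ) T, B ≤ f t := by
  intro t ht
  by_contra hgt
  push_neg at hgt
  set S : Set ℝ := {u | u ∈ Set.Icc (0:ℝ) t ∧ B ≤ f u} with hSdef
  have h0S : (0:ℝ) ∈ S := ⟨⟨le_rfl, ht.1⟩, h0⟩
  have hSne : S.Nonempty := ⟨0, h0S⟩
  have hSbdd : BddAbove S := ⟨t, fun u hu => hu.1.2⟩
  set s := sSup S with hs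
  have hs0 : 0 ≤ s := le_csSup hSbdd h0S
  have hst : s ≤ t := csSup_le hSne (fun u hu => hu.1.2)
  have hsIcc : s ∈ Set.Icc (0:ℝ) T := ⟨hs0, hst.trans ht.2⟩
  have hcl : s ∈ closure S := csSup_mem_closure hSne hSbdd
  have hfs : B ≤ f s := by
    have hne : (𝓝[S] s).NeBot := mem_closure_iff_nhdsWithin_neBot.mp hcl
    have hten : Filter.Tendsto f (𝓝[S] s) (𝓝 (f s)) :=
      ((hderiv s hsIcc).continuousAt.tendsto).mono_left nhdsWithin_le_nhds
    exact ge_of_tendsto hten (eventually_mem_nhdsWithin.mono fun u hu => hu.2)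
  have hslt : s < t := lt_of_le_of_ne hst (fun h => by rw [h] at hfs; linarith)
  have hgpos : 0 < g s := hpos s hsIcc hfs
  have hdw : HasDerivWithinAt f (g s) (Set.Ioi s) s := (hderiv s hsIcc).hasDerivWithinAt
  have hT2 : Filter.Tendsto (slope f s) (𝓝[Set.Ioi s] s) (𝓝 (g s)) := by
    have h := hasDerivWithinAt_iff_tendsto_slope.mp hdw
    rwa [Set.diff_singleton_eq_self (Set.notMem_Ioi.mpr le_rfl)] at h
  have hev1 : ∀ᶠ u in 𝓝[Set.Ioi s] s, 0 < slope f s u :=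
    hT2.eventually (eventually_gt_nhds hgpos)
  have hev2 : ∀ᶠ u in 𝓝[Set.Ioi s] s, u ∈ Set.Ioc s t :=
    Filter.eventually_of_mem (Ioc_mem_nhdsGT_of_mem ⟨le_rfl, hslt⟩) (fun u hu => hu)
  have : (𝓝[Set.Ioi s] s).NeBot := nhdsGT_neBot s
  obtain ⟨u, hu1, hu2⟩ := (hev1.and hev2).exists
  have husgt : f s < f u := by
    have hus : 0 < u - s := sub_pos.mpr hu2.1
    have hmul := mul_pos hu1 hus
    rw [slope_def_field, div_mul_cancel₀ _ (ne_of_gt hus)] at hmul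
    linarith
  have huS : u ∈ S := ⟨⟨hs0.trans hu2.1.le, hu2.2⟩, le_trans hfs husgt.le⟩
  exact absurd (le_csSup hSbdd huS) (not_le.mpr hu2.1)

/-- Corollary 2.2 (blow-up for the delayed model with subquadratic predator
growth `c Y^m`, `1 < m < 2`): under the stated largeness conditions no bounded
positive solution exists on `[−τ, t₁]`. -/
theorem stmt_8 (r K ω D d c ω₁ D₁ τ m X₀ Y₀ t₁ M a : ℝ)
    (hr : 0 < r) (hK : 0 < K) (hω : 0 < ω) (hD : 0 < D) (hd : 0 < d)
    (hc : 0 < c) (hω₁ : 0 < ω₁) (hD₁ : 0 < D₁) (hτ : 0 < τ)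
    (hm1 : 1 < m) (hm2 : m < 2)
    (hX₀ : 0 < X₀) (hY₀ : 0 < Y₀) (hX₀K : X₀ ≤ K)
    (ht₁τ : τ < t₁) (hM : Y₀ ≤ M)
    (ha : a = ω₁ * M * Real.exp (ω * (t₁ - τ)) / X₀)
    (hca : 2 * a < c * Y₀ ^ (m - 1))
    (ht₁ : 2 * Y₀ ^ (1 - m) / (c * (m - 1)) ≤ t₁) :
    ¬ ∃ X Y : ℝ → ℝ,
      (∀ t ∈ Set.Icc (-τ) (0 : ℝ), X t = X₀ ∧ Y t = Y₀) ∧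
      (∀ t ∈ Set.Icc (0 : ℝ) t₁,
        HasDerivAt X (r * X t * (1 - X t / K) - ω * X t * Y t / (D + d * X t + Y t)) t ∧
        HasDerivAt Y (c * Y t ^ m - ω₁ * Y t * Y (t - τ) / (X (t - τ) + D₁)) t) ∧
      (∀ t ∈ Set.Icc (-τ) t₁, 0 < X t ∧ 0 < Y t ∧ Y t ≤ M) := by
  rintro ⟨X, Y, hinit, hode, hbound⟩
  have ht₁0 : (0:ℝ) < t₁ := hτ.trans ht₁τ
  have h0mem : (0:ℝ) ∈ Set.Icc (-τ) (0:ℝ) := ⟨neg_nonpos.mpr hτ.le, le_rfl⟩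
  have hX0 : X 0 = X₀ := (hinit 0 h0mem).1
  have hY0 : Y 0 = Y₀ := (hinit 0 h0mem).2
  have hsub : Set.Icc (0:ℝ) t₁ ⊆ Set.Icc (-τ) t₁ :=
    Set.Icc_subset_Icc (by linarith) le_rfl
  have hXpos : ∀ t ∈ Set.Icc (0:ℝ) t₁, 0 < X t := fun t ht => (hbound t (hsub ht)).1
  have hYpos : ∀ t ∈ Set.Icc (0:ℝ) t₁, 0 < Y t := fun t ht => (hbound t (hsub ht)).2.1
  have hdelay_mem : ∀ t ∈ Set.Icc (0:ℝ) t₁, t - τ ∈ Set.Icc (-τ) t₁ := by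
    intro t ht
    constructor
    · linarith [ht.1]
    · linarith [ht.2]
  -- Step 1: X ≤ K on [0, t₁]
  have hXK : ∀ t ∈ Set.Icc (0:ℝ) t₁, X t ≤ K := by
    apply barrier_le (fun t ht => (hode t ht).1)
    · rw [hX0]; exact hX₀K
    · intro t ht hKlt
      have hXt := hXpos t ht
      have hYt := hYpos t ht
      have hden : 0 < D + d * X t + Y t := by positivity
      have h1 : r * X t * (1 - X t / K) < 0 := by
        apply mul_neg_of_pos_of_neg (by positivity)
        rw [sub_neg]
        exact (one_lt_div hK).mpr hKlt
      have h2 : 0 < ω * X t * Y t / (D + d * X t + Y t) := by positivity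
      linarith
  -- Step 2: Gronwall lower bound: X t * exp(ω t) ≥ X₀ on [0, t₁]
  have hgron : ∀ t ∈ Set.Icc (0:ℝ) t₁, X₀ ≤ X t * Real.exp (ω * t) := by
    set g : ℝ → ℝ := fun t => X t * Real.exp (ω * t) with hgdef
    have hgderiv : ∀ t ∈ Set.Icc (0:ℝ) t₁,
        HasDerivAt g ((r * X t * (1 - X t / K) - ω * X t * Y t / (D + d * X t + Y t))
          * Real.exp (ω * t) + X t * (Real.exp (ω * t) * ω)) t := by
      intro t ht
      have h1 : HasDerivAt (fun u : ℝ => ω * u) ω t := by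
        simpa using (hasDerivAt_id t).const_mul ω
      have he : HasDerivAt (fun u : ℝ => Real.exp (ω * u)) (Real.exp (ω * t) * ω) t :=
        (Real.hasDerivAt_exp (ω * t)).comp t h1
      exact (hode t ht).1.mul he
    have hmono : MonotoneOn g (Set.Icc (0:ℝ) t₁) := by
      apply monotoneOn_of_deriv_nonneg (convex_Icc _ _)
      · intro x hx
        exact (hgderiv x hx).continuousAt.continuousWithinAt
      · intro x hx
        rw [interior_Icc] at hx
        exact ((hgderiv x ⟨hx.1.le, hx.2.le⟩).differentiableAt).differentiableWithinAt
      · intro x hx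
        rw [interior_Icc] at hx
        have hxI : x ∈ Set.Icc (0:ℝ) t₁ := ⟨hx.1.le, hx.2.le⟩
        rw [(hgderiv x hxI).deriv]
        have hXx := hXpos x hxI
        have hYx := hYpos x hxI
        have hXKx := hXK x hxI
        have hden : 0 < D + d * X x + Y x := by positivity
        have hexp : 0 < Real.exp (ω * x) := Real.exp_pos _
        have hlog : 0 ≤ r * X x * (1 - X x / K) := by
          have h3 : 0 ≤ 1 - X x / K := by
            rw [sub_nonneg]
            exact (div_le_one hK).mpr hXKx
          positivity
        have hpred : ω * X x * Y x / (D + d * X x + Y x) ≤ ω * X x := by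
          rw [div_le_iff₀ hden]
          exact mul_le_mul_of_nonneg_left
            (by linarith [mul_pos hd hXx] : Y x ≤ D + d * X x + Y x) (by positivity)
        have hF : -(ω * X x) ≤
            r * X x * (1 - X x / K) - ω * X x * Y x / (D + d * X x + Y x) := by linarith
        have h5 := mul_le_mul_of_nonneg_right hF hexp.le
        linarith [h5]
    intro t ht
    have hle := hmono (Set.left_mem_Icc.mpr ht₁0.le) ht ht.1
    have hg0 : g 0 = X₀ := by simp [hgdef, hX0]
    rw [hg0] at hle
    exact hle
  -- lower bound for X at delayed times
  set L : ℝ := X₀ / Real.exp (ω * (t₁ - τ)) with hLdef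
  have hLpos : 0 < L := by positivity
  have hXdelay : ∀ t ∈ Set.Icc (0:ℝ) t₁, L ≤ X (t - τ) := by
    intro t ht
    rcases le_or_gt (t - τ) 0 with hc0 | hc0
    · have hXc : X (t - τ) = X₀ := (hinit (t - τ) ⟨by linarith [ht.1], hc0⟩).1
      rw [hXc, hLdef, div_le_iff₀ (Real.exp_pos _)]
      exact le_mul_of_one_le_right hX₀.le
        (Real.one_le_exp (mul_nonneg hω.le (by linarith)))
    · have hmem : t - τ ∈ Set.Icc (0:ℝ) t₁ := ⟨hc0.le, by linarith [ht.2]⟩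
      have h1 := hgron (t - τ) hmem
      have hXt := hXpos (t - τ) hmem
      have hexble : Real.exp (ω * (t - τ)) ≤ Real.exp (ω * (t₁ - τ)) :=
        Real.exp_le_exp.mpr (mul_le_mul_of_nonneg_left (by linarith [ht.2]) hω.le)
      rw [hLdef, div_le_iff₀ (Real.exp_pos _)]
      calc X₀ ≤ X (t - τ) * Real.exp (ω * (t - τ)) := h1
        _ ≤ X (t - τ) * Real.exp (ω * (t₁ - τ)) :=
            mul_le_mul_of_nonneg_left hexble hXt.le
  have hM0 : 0 < M := lt_of_lt_of_le hY₀ hM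
  have hapos : 0 < a := by rw [ha]; positivity
  -- the delay term is bounded by a * Y t
  have hDT : ∀ t ∈ Set.Icc (0:ℝ) t₁,
      ω₁ * Y t * Y (t - τ) / (X (t - τ) + D₁) ≤ a * Y t := by
    intro t ht
    have hYt := hYpos t ht
    have hYd : 0 < Y (t - τ) := (hbound (t - τ) (hdelay_mem t ht)).2.1
    have hYdM : Y (t - τ) ≤ M := (hbound (t - τ) (hdelay_mem t ht)).2.2
    have hXd : L ≤ X (t - τ) := hXdelay t ht
    have h1 : ω₁ * Y t * Y (t - τ) / (X (t - τ) + D₁) ≤ ω₁ * Y t * M / L := by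
      apply div_le_div₀ (by positivity)
        (mul_le_mul_of_nonneg_left hYdM (by positivity)) hLpos (by linarith)
    have h2 : ω₁ * Y t * M / L = a * Y t := by
      rw [hLdef, ha]
      field_simp
    linarith
  -- Step 3: Y ≥ Y₀ on [0, t₁]
  have hY₀m : 0 < Y₀ ^ (m - 1) := Real.rpow_pos_of_pos hY₀ _
  have hYge : ∀ t ∈ Set.Icc (0:ℝ) t₁, Y₀ ≤ Y t := by
    apply barrier_ge (fun t ht => (hode t ht).2)
    · rw [hY0]
    · intro t ht hYt₀
      have hYt := hYpos t ht
      have hDTt := hDT t ht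
      have hsplit : Y t ^ m = Y t ^ (m - 1) * Y t := by
        have h := Real.rpow_add hYt (m - 1) 1
        rw [Real.rpow_one] at h
        rw [← h]
        congr 1
        ring
      have hpow : Y₀ ^ (m - 1) ≤ Y t ^ (m - 1) :=
        Real.rpow_le_rpow hY₀.le hYt₀ (by linarith)
      have h0 : c * Y₀ ^ (m - 1) ≤ c * Y t ^ (m - 1) :=
        mul_le_mul_of_nonneg_left hpow hc.le
      have h1 : a < c * Y t ^ (m - 1) := by linarith
      have h2 : a * Y t < c * Y t ^ (m - 1) * Y t := mul_lt_mul_of_pos_right h1 hYt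
      rw [hsplit]
      linarith [h2, hDTt]
  -- Step 4: Y' ≥ (c/2) Y^m on [0, t₁]
  have hYkey : ∀ t ∈ Set.Icc (0:ℝ) t₁,
      c / 2 * Y t ^ m ≤ c * Y t ^ m - ω₁ * Y t * Y (t - τ) / (X (t - τ) + D₁) := by
    intro t ht
    have hYt := hYpos t ht
    have hYt₀ := hYge t ht
    have hDTt := hDT t ht
    have hsplit : Y t ^ m = Y t ^ (m - 1) * Y t := by
      have h := Real.rpow_add hYt (m - 1) 1
      rw [Real.rpow_one] at h
      rw [← h]
      congr 1
      ring
    have hpow : Y₀ ^ (m - 1) ≤ Y t ^ (m - 1) :=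
      Real.rpow_le_rpow hY₀.le hYt₀ (by linarith)
    have h1 : a * Y t ≤ c / 2 * Y₀ ^ (m - 1) * Y t :=
      mul_le_mul_of_nonneg_right (by linarith) hYt.le
    have h2 : c / 2 * Y₀ ^ (m - 1) * Y t ≤ c / 2 * Y t ^ (m - 1) * Y t :=
      mul_le_mul_of_nonneg_right
        (mul_le_mul_of_nonneg_left hpow (by positivity)) hYt.le
    have h3 : a * Y t ≤ c / 2 * Y t ^ m := by
      rw [hsplit]; linarith [h1, h2]
    linarith
  -- Step 5: W t = Y t ^ (1-m) + (c/2)(m-1) t is antitone on [0,t₁]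
  set W : ℝ → ℝ := fun t => Y t ^ (1 - m) + c / 2 * (m - 1) * t with hWdef
  have hWderiv : ∀ t ∈ Set.Icc (0:ℝ) t₁,
      HasDerivAt W ((c * Y t ^ m - ω₁ * Y t * Y (t - τ) / (X (t - τ) + D₁))
        * (1 - m) * Y t ^ (1 - m - 1) + c / 2 * (m - 1)) t := by
    intro t ht
    have hYt := hYpos t ht
    have h1 : HasDerivAt (fun u => Y u ^ (1 - m))
        ((c * Y t ^ m - ω₁ * Y t * Y (t - τ) / (X (t - τ) + D₁))
          * (1 - m) * Y t ^ (1 - m - 1)) t :=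
      (hode t ht).2.rpow_const (Or.inl hYt.ne')
    have h2 : HasDerivAt (fun u : ℝ => c / 2 * (m - 1) * u) (c / 2 * (m - 1)) t := by
      simpa using (hasDerivAt_id t).const_mul (c / 2 * (m - 1))
    exact h1.add h2
  have hWanti : AntitoneOn W (Set.Icc (0:ℝ) t₁) := by
    apply antitoneOn_of_deriv_nonpos (convex_Icc _ _)
    · intro x hx
      exact (hWderiv x hx).continuousAt.continuousWithinAt
    · intro x hx
      rw [interior_Icc] at hx
      exact ((hWderiv x ⟨hx.1.le, hx.2.le⟩).differentiableAt).differentiableWithinAt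
    · intro x hx
      rw [interior_Icc] at hx
      have hxI : x ∈ Set.Icc (0:ℝ) t₁ := ⟨hx.1.le, hx.2.le⟩
      rw [(hWderiv x hxI).deriv]
      have hYx := hYpos x hxI
      have hkey := hYkey x hxI
      have hsm : (1:ℝ) - m - 1 = -m := by ring
      rw [hsm]
      have hneg : 0 < Y x ^ (-m) := Real.rpow_pos_of_pos hYx _
      have hprod : Y x ^ m * Y x ^ (-m) = 1 := by
        rw [← Real.rpow_add hYx]
        simp
      have h1 : c / 2 ≤ (c * Y x ^ m - ω₁ * Y x * Y (x - τ) / (X (x - τ) + D₁))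
          * Y x ^ (-m) := by
        have h2 := mul_le_mul_of_nonneg_right hkey hneg.le
        calc c / 2 = c / 2 * (Y x ^ m * Y x ^ (-m)) := by rw [hprod]; ring
          _ = c / 2 * Y x ^ m * Y x ^ (-m) := by ring
          _ ≤ _ := h2
      have h4 := mul_le_mul_of_nonneg_left h1 (by linarith : (0:ℝ) ≤ m - 1)
      linarith [h4]
  -- conclude
  have hW := hWanti (Set.left_mem_Icc.mpr ht₁0.le) (Set.right_mem_Icc.mpr ht₁0.le) ht₁0.le
  have hW0 : W 0 = Y₀ ^ (1 - m) := by simp [hWdef, hY0]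
  have hYt₁pos : 0 < Y t₁ ^ (1 - m) :=
    Real.rpow_pos_of_pos (hYpos t₁ (Set.right_mem_Icc.mpr ht₁0.le)) _
  have hmc : 0 < c * (m - 1) := mul_pos hc (by linarith)
  have ht₁' : 2 * Y₀ ^ (1 - m) ≤ t₁ * (c * (m - 1)) := by
    rw [div_le_iff₀ hmc] at ht₁
    linarith
  rw [hW0] at hW
  have hWt₁ : W t₁ = Y t₁ ^ (1 - m) + c / 2 * (m - 1) * t₁ := rfl
  rw [hWt₁] at hW
  linarith
end
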